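/- arXiv:2003.05418 — 3 statements merged into one kernel-verified Lean document; each statement's English description precedes it below -/
import Mathlib

section
/- For every nonnegative integer m and |q|<1, (-1)^m q^{m(m+1)/2} Σ_{n=0}^{m} (q^{-m};q)_n (q^{m+1};q)_{n+2} = Σ_{n=0}^{m} (1 - q^{2n+2}) q^{2n²+3n+1} Σ_{j=-n-1}^{n} (-1)^{j+1} q^{-j(3j+1)/2}. -/
/-- Finite q-Pochhammer symbol `(a;q)_n`. -/
noncomputable def qp (a q : ℂ) (n : ℕ) : ℂ := ∏ k ∈ Finset.range n, (1 - a * q ^ k)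

namespace Stmt4Aux

def Tn (k : ℕ) : ℕ := k * (k + 1) / 2

lemma Tn_succ (k : ℕ) : Tn (k + 1) = Tn k + (k + 1) := by
  have h : (k + 1) * (k + 1 + 1) = k * (k + 1) + 2 * (k + 1) := by ring
  unfold Tn
  omega

lemma two_Tn (k : ℕ) : 2 * Tn k = k * (k + 1) := by
  have h : 2 ∣ k * (k + 1) := (Nat.even_mul_succ_self k).two_dvd
  unfold Tn
  omega

lemma le_Tn (k : ℕ) : k ≤ Tn k := by
  have h := two_Tn k
  cases k with
  | zero => simp [Tn]
  | succ n =>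
    have h2 : (n + 1) * (n + 1 + 1) = n * n + 3 * n + 2 := by ring
    rw [h2] at h
    generalize n * n = a at h
    omega

lemma qp_zero (a q : ℂ) : qp a q 0 = 1 := by simp [qp]

lemma qp_succ (a q : ℂ) (n : ℕ) : qp a q (n + 1) = qp a q n * (1 - a * q ^ n) :=
  Finset.prod_range_succ _ _

lemma qp_one (a q : ℂ) : qp a q 1 = 1 - a := by simp [qp]

lemma qp_succ' (a q : ℂ) (n : ℕ) : qp a q (n + 1) = (1 - a) * qp (a * q) q n := by
  unfold qp
  rw [Finset.prod_range_succ']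
  simp only [pow_zero, mul_one]
  rw [mul_comm]
  congr 1
  exact Finset.prod_congr rfl fun k _ => by ring

lemma qp_concat (a q : ℂ) (s t : ℕ) : qp a q (s + t) = qp a q s * qp (a * q ^ s) q t := by
  induction t with
  | zero => simp [qp_zero]
  | succ n ih =>
    rw [show s + (n + 1) = (s + n) + 1 from rfl, qp_succ, ih, qp_succ, pow_add]
    ring

noncomputable def Sq (q : ℂ) (n : ℕ) : ℂ :=
  ∑ j ∈ Finset.Icc (-(n : ℤ) - 1) (n : ℤ), (-1 : ℂ) ^ (j + 1) * q ^ (-(j * (3 * j + 1) / 2))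

noncomputable def weT (q : ℂ) (m r : ℕ) : ℂ :=
  (-1) ^ r * q ^ (Tn r) * qp (q ^ (r + 1)) q (2 * (m - r))
noncomputable def woT (q : ℂ) (m r : ℕ) : ℂ :=
  (-1) ^ r * q ^ (Tn r) * qp (q ^ (r + 1)) q (2 * (m - r) + 1)
noncomputable def beT (q : ℂ) (m r : ℕ) : ℂ :=
  (-1) ^ r * q ^ (Tn r - r) * qp (q ^ (r + 1)) q (2 * (m - r))
noncomputable def boT (q : ℂ) (m r : ℕ) : ℂ :=
  (-1) ^ r * q ^ (Tn r - r) * qp (q ^ (r + 1)) q (2 * (m - r) + 1)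

noncomputable def WE (q : ℂ) (m : ℕ) : ℂ := ∑ r ∈ Finset.range (m + 1), weT q m r
noncomputable def WO (q : ℂ) (m : ℕ) : ℂ := ∑ r ∈ Finset.range (m + 1), woT q m r
noncomputable def BE (q : ℂ) (m : ℕ) : ℂ := ∑ r ∈ Finset.range (m + 1), beT q m r
noncomputable def BO (q : ℂ) (m : ℕ) : ℂ := ∑ r ∈ Finset.range (m + 1), boT q m r

lemma strip_a (q : ℂ) (m : ℕ) : WO q m = WE q m - q ^ (2 * m + 1) * BE q m := by
  unfold WO WE BE
  rw [Finset.mul_sum, ← Finset.sum_sub_distrib]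
  apply Finset.sum_congr rfl
  intro r hr
  have hrm : r ≤ m := by simpa [Nat.lt_succ_iff] using hr
  unfold woT weT beT
  rw [qp_succ]
  have h1 : q ^ (r + 1) * q ^ (2 * (m - r)) = q ^ (2 * m + 1 - r) := by
    rw [← pow_add]; congr 1; omega
  have h2 : q ^ (Tn r) * q ^ (2 * m + 1 - r) = q ^ (2 * m + 1) * q ^ (Tn r - r) := by
    rw [← pow_add, ← pow_add]; congr 1; have := le_Tn r; omega
  rw [h1]
  linear_combination (-(-1 : ℂ) ^ r * qp (q ^ (r + 1)) q (2 * (m - r))) * h2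

lemma strip_b (q : ℂ) (m : ℕ) :
    WE q (m + 1) = WO q m - q ^ (2 * m + 2) * BO q m + (-1) ^ (m + 1) * q ^ (Tn (m + 1)) := by
  unfold WE WO BO
  rw [Finset.sum_range_succ]
  have hlast : weT q (m + 1) (m + 1) = (-1) ^ (m + 1) * q ^ (Tn (m + 1)) := by
    unfold weT
    rw [Nat.sub_self, Nat.mul_zero, qp_zero, mul_one]
  rw [hlast, Finset.mul_sum, ← Finset.sum_sub_distrib]
  congr 1
  apply Finset.sum_congr rfl
  intro r hr
  have hrm : r ≤ m := by simpa [Nat.lt_succ_iff] using hr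
  unfold weT woT boT
  rw [show 2 * ((m + 1) - r) = (2 * (m - r) + 1) + 1 by omega, qp_succ]
  have h1 : q ^ (r + 1) * q ^ (2 * (m - r) + 1) = q ^ (2 * m + 2 - r) := by
    rw [← pow_add]; congr 1; omega
  have h2 : q ^ (Tn r) * q ^ (2 * m + 2 - r) = q ^ (2 * m + 2) * q ^ (Tn r - r) := by
    rw [← pow_add, ← pow_add]; congr 1; have := le_Tn r; omega
  rw [h1]
  linear_combination (-(-1 : ℂ) ^ r * qp (q ^ (r + 1)) q (2 * (m - r) + 1)) * h2


lemma step_identity (q : ℂ) (r : ℕ) (X : ℂ) :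
    (-1) ^ (r + 1) * q ^ (Tn (r + 1) - (r + 1)) * X =
      (-1) ^ (r + 1) * q ^ (Tn (r + 1)) * X - (-1) ^ r * q ^ (Tn r) * ((1 - q ^ (r + 1)) * X) := by
  rw [Tn_succ, Nat.add_sub_cancel, pow_add]
  ring

lemma strip_c (q : ℂ) (m : ℕ) : BO q m = WO q m - WE q m + (-1) ^ m * q ^ (Tn m) := by
  cases m with
  | zero =>
    unfold BO WO WE
    rw [Finset.sum_range_one, Finset.sum_range_one, Finset.sum_range_one]
    unfold boT woT weT
    simp [Tn, qp_zero]
  | succ k =>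
    unfold BO WO WE
    have hBO : ∑ r ∈ Finset.range (k + 1 + 1), boT q (k + 1) r =
        (∑ r ∈ Finset.range (k + 1), boT q (k + 1) (r + 1)) + boT q (k + 1) 0 :=
      Finset.sum_range_succ' _ _
    have hWO : ∑ r ∈ Finset.range (k + 1 + 1), woT q (k + 1) r =
        (∑ r ∈ Finset.range (k + 1), woT q (k + 1) (r + 1)) + woT q (k + 1) 0 :=
      Finset.sum_range_succ' _ _
    have hWE : ∑ r ∈ Finset.range (k + 1 + 1), weT q (k + 1) r =
        (∑ r ∈ Finset.range (k + 1), weT q (k + 1) r) + weT q (k + 1) (k + 1) :=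
      Finset.sum_range_succ _ _
    rw [hBO, hWO, hWE]
    have h0 : boT q (k + 1) 0 = woT q (k + 1) 0 := by
      unfold boT woT; rfl
    have hlast : weT q (k + 1) (k + 1) = (-1) ^ (k + 1) * q ^ (Tn (k + 1)) := by
      unfold weT
      rw [Nat.sub_self, Nat.mul_zero, qp_zero, mul_one]
    rw [h0, hlast]
    have hsum : ∑ r ∈ Finset.range (k + 1), boT q (k + 1) (r + 1) =
        ∑ r ∈ Finset.range (k + 1), (woT q (k + 1) (r + 1) - weT q (k + 1) r) := by
      apply Finset.sum_congr rfl
      intro r hr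
      have hrm : r ≤ k := by simpa [Nat.lt_succ_iff] using hr
      have hbo : boT q (k + 1) (r + 1) =
          (-1) ^ (r + 1) * q ^ (Tn (r + 1) - (r + 1)) * qp (q ^ (r + 1 + 1)) q (2 * (k - r) + 1) := by
        unfold boT
        rw [show (k + 1) - (r + 1) = k - r by omega]
      have hwo : woT q (k + 1) (r + 1) =
          (-1) ^ (r + 1) * q ^ (Tn (r + 1)) * qp (q ^ (r + 1 + 1)) q (2 * (k - r) + 1) := by
        unfold woT
        rw [show (k + 1) - (r + 1) = k - r by omega]
      have hwe : weT q (k + 1) r =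
          (-1) ^ r * q ^ (Tn r) * ((1 - q ^ (r + 1)) * qp (q ^ (r + 1 + 1)) q (2 * (k - r) + 1)) := by
        unfold weT
        rw [show 2 * ((k + 1) - r) = (2 * (k - r) + 1) + 1 by omega, qp_succ',
          show q ^ (r + 1) * q = q ^ (r + 1 + 1) from (pow_succ q (r + 1)).symm]
      rw [hbo, hwo, hwe]
      exact step_identity q r _
    rw [hsum, Finset.sum_sub_distrib]
    ring

lemma strip_d (q : ℂ) (m : ℕ) : BE q (m + 1) = WE q (m + 1) - WO q m := by
  unfold BE WE WO
  have hBE : ∑ r ∈ Finset.range (m + 1 + 1), beT q (m + 1) r =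
      (∑ r ∈ Finset.range (m + 1), beT q (m + 1) (r + 1)) + beT q (m + 1) 0 :=
    Finset.sum_range_succ' _ _
  have hWE : ∑ r ∈ Finset.range (m + 1 + 1), weT q (m + 1) r =
      (∑ r ∈ Finset.range (m + 1), weT q (m + 1) (r + 1)) + weT q (m + 1) 0 :=
    Finset.sum_range_succ' _ _
  rw [hBE, hWE]
  have h0 : beT q (m + 1) 0 = weT q (m + 1) 0 := by
    unfold beT weT; rfl
  rw [h0]
  have hsum : ∑ r ∈ Finset.range (m + 1), beT q (m + 1) (r + 1) =
      ∑ r ∈ Finset.range (m + 1), (weT q (m + 1) (r + 1) - woT q m r) := by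
    apply Finset.sum_congr rfl
    intro r hr
    have hrm : r ≤ m := by simpa [Nat.lt_succ_iff] using hr
    have hbe : beT q (m + 1) (r + 1) =
        (-1) ^ (r + 1) * q ^ (Tn (r + 1) - (r + 1)) * qp (q ^ (r + 1 + 1)) q (2 * (m - r)) := by
      unfold beT
      rw [show (m + 1) - (r + 1) = m - r by omega]
    have hwe : weT q (m + 1) (r + 1) =
        (-1) ^ (r + 1) * q ^ (Tn (r + 1)) * qp (q ^ (r + 1 + 1)) q (2 * (m - r)) := by
      unfold weT
      rw [show (m + 1) - (r + 1) = m - r by omega]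
    have hwo : woT q m r =
        (-1) ^ r * q ^ (Tn r) * ((1 - q ^ (r + 1)) * qp (q ^ (r + 1 + 1)) q (2 * (m - r))) := by
      unfold woT
      rw [show 2 * (m - r) + 1 = (2 * (m - r)) + 1 from rfl, qp_succ',
        show q ^ (r + 1) * q = q ^ (r + 1 + 1) from (pow_succ q (r + 1)).symm]
    rw [hbe, hwe, hwo]
    exact step_identity q r _
  rw [hsum, Finset.sum_sub_distrib]
  ring


lemma inv_neg_one_pow (k : ℕ) : ((-1 : ℂ) ^ k)⁻¹ = (-1 : ℂ) ^ k := by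
  rcases Nat.even_or_odd k with h | h
  · rw [h.neg_one_pow]; norm_num
  · rw [h.neg_one_pow]; norm_num

lemma neg_one_zpow_natCast (k : ℕ) : (-1 : ℂ) ^ ((k : ℤ)) = (-1 : ℂ) ^ k := zpow_natCast _ _

noncomputable def dT (q : ℂ) (n : ℕ) : ℂ := (q ^ (Tn (2 * n + 1)) - q ^ (Tn (2 * n + 2))) * Sq q n

noncomputable def Ee (q : ℂ) (m : ℕ) : ℂ :=
  (∑ n ∈ Finset.range m, dT q n) + (-1) ^ m * q ^ (Tn m)

noncomputable def Oo (q : ℂ) (m : ℕ) : ℂ :=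
  (∑ n ∈ Finset.range (m + 1), dT q n) + q ^ (Tn (2 * m + 2)) * Sq q m

lemma S_step (q : ℂ) (hq0 : q ≠ 0) (m : ℕ) :
    q ^ (Tn (2 * m + 3)) * Sq q (m + 1) =
      q ^ (Tn (2 * m + 3)) * Sq q m +
        (-1) ^ (m + 1) * (q ^ (Tn (m + 1)) - q ^ (Tn (m + 1) + (2 * m + 3))) := by
  have hset : Finset.Icc (-((m + 1 : ℕ) : ℤ) - 1) ((m + 1 : ℕ) : ℤ) =
      insert (-(m : ℤ) - 2) (insert ((m : ℤ) + 1) (Finset.Icc (-(m : ℤ) - 1) (m : ℤ))) := by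
    ext j
    simp only [Finset.mem_Icc, Finset.mem_insert]
    push_cast
    omega
  have hmem1 : ((m : ℤ) + 1) ∉ Finset.Icc (-(m : ℤ) - 1) (m : ℤ) := by
    simp only [Finset.mem_Icc]; omega
  have hmem0 : (-(m : ℤ) - 2) ∉ insert ((m : ℤ) + 1) (Finset.Icc (-(m : ℤ) - 1) (m : ℤ)) := by
    simp only [Finset.mem_insert, Finset.mem_Icc]; omega
  have hSq : Sq q (m + 1) =
      ((-1 : ℂ) ^ ((-(m : ℤ) - 2) + 1) * q ^ (-((-(m : ℤ) - 2) * (3 * (-(m : ℤ) - 2) + 1) / 2))) +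
      (((-1 : ℂ) ^ (((m : ℤ) + 1) + 1) * q ^ (-(((m : ℤ) + 1) * (3 * ((m : ℤ) + 1) + 1) / 2))) +
        Sq q m) := by
    unfold Sq
    rw [hset, Finset.sum_insert hmem0, Finset.sum_insert hmem1]
  rw [hSq]
  -- sign evaluations
  have hsgnA : (-1 : ℂ) ^ ((-(m : ℤ) - 2) + 1) = (-1 : ℂ) ^ (m + 1) := by
    rw [show (-(m : ℤ) - 2) + 1 = -(((m + 1 : ℕ) : ℤ)) by push_cast; ring, zpow_neg,
      neg_one_zpow_natCast, inv_neg_one_pow]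
  have hsgnB : (-1 : ℂ) ^ (((m : ℤ) + 1) + 1) = (-1 : ℂ) ^ m := by
    rw [show ((m : ℤ) + 1) + 1 = ((m + 2 : ℕ) : ℤ) by push_cast; ring, neg_one_zpow_natCast,
      pow_succ, pow_succ]
    ring
  -- power A : q^{Tn (2m+3)} * q^{-pA} = q^{Tn (m+1)}
  have hdvdA : (2 : ℤ) ∣ ((m : ℤ) + 2) * (3 * (m : ℤ) + 5) := by
    rcases Int.even_or_odd (m : ℤ) with ⟨k, hk⟩ | ⟨k, hk⟩
    · exact ⟨(k + 1) * (3 * (m : ℤ) + 5), by rw [hk]; ring⟩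
    · exact ⟨((m : ℤ) + 2) * (3 * k + 4), by rw [hk]; ring⟩
  obtain ⟨cA, hcA⟩ := hdvdA
  have hT1 : (2 : ℤ) * ((Tn (2 * m + 3) : ℕ) : ℤ) = (2 * (m : ℤ) + 3) * (2 * (m : ℤ) + 4) := by
    have h := two_Tn (2 * m + 3)
    have h' : (2 : ℤ) * ((Tn (2 * m + 3) : ℕ) : ℤ) =
        ((2 * m + 3 : ℕ) : ℤ) * ((2 * m + 3 + 1 : ℕ) : ℤ) := by exact_mod_cast h
    push_cast at h'
    linear_combination h'
  have hT2 : (2 : ℤ) * ((Tn (m + 1) : ℕ) : ℤ) = ((m : ℤ) + 1) * ((m : ℤ) + 2) := by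
    have h := two_Tn (m + 1)
    have h' : (2 : ℤ) * ((Tn (m + 1) : ℕ) : ℤ) =
        ((m + 1 : ℕ) : ℤ) * ((m + 1 + 1 : ℕ) : ℤ) := by exact_mod_cast h
    push_cast at h'
    linear_combination h'
  have hpowA : q ^ (Tn (2 * m + 3)) * q ^ (-((-(m : ℤ) - 2) * (3 * (-(m : ℤ) - 2) + 1) / 2)) =
      q ^ (Tn (m + 1)) := by
    rw [← zpow_natCast q (Tn (2 * m + 3)), ← zpow_natCast q (Tn (m + 1)), ← zpow_add₀ hq0]
    congr 1
    rw [show (-(m : ℤ) - 2) * (3 * (-(m : ℤ) - 2) + 1) = ((m : ℤ) + 2) * (3 * (m : ℤ) + 5) by ring,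
      hcA, Int.mul_ediv_cancel_left _ (by norm_num : (2 : ℤ) ≠ 0)]
    ring_nf
    ring_nf at hT1 hT2 hcA
    linarith
  -- power B : q^{Tn (2m+3)} * q^{-pB} = q^(Tn (m+1) + (2m+3))
  have hdvdB : (2 : ℤ) ∣ ((m : ℤ) + 1) * (3 * (m : ℤ) + 4) := by
    rcases Int.even_or_odd (m : ℤ) with ⟨k, hk⟩ | ⟨k, hk⟩
    · exact ⟨((m : ℤ) + 1) * (3 * k + 2), by rw [hk]; ring⟩
    · exact ⟨(k + 1) * (3 * (m : ℤ) + 4), by rw [hk]; ring⟩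
  obtain ⟨cB, hcB⟩ := hdvdB
  have hpowB : q ^ (Tn (2 * m + 3)) * q ^ (-(((m : ℤ) + 1) * (3 * ((m : ℤ) + 1) + 1) / 2)) =
      q ^ (Tn (m + 1) + (2 * m + 3)) := by
    rw [← zpow_natCast q (Tn (2 * m + 3)), ← zpow_natCast q (Tn (m + 1) + (2 * m + 3)),
      ← zpow_add₀ hq0]
    congr 1
    rw [show ((m : ℤ) + 1) * (3 * ((m : ℤ) + 1) + 1) = ((m : ℤ) + 1) * (3 * (m : ℤ) + 4) by ring,
      hcB, Int.mul_ediv_cancel_left _ (by norm_num : (2 : ℤ) ≠ 0)]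
    push_cast
    ring_nf
    ring_nf at hT1 hT2 hcB
    linarith
  calc q ^ Tn (2 * m + 3) *
      ((-1 : ℂ) ^ ((-(m : ℤ) - 2) + 1) * q ^ (-((-(m : ℤ) - 2) * (3 * (-(m : ℤ) - 2) + 1) / 2)) +
        ((-1 : ℂ) ^ (((m : ℤ) + 1) + 1) * q ^ (-(((m : ℤ) + 1) * (3 * ((m : ℤ) + 1) + 1) / 2)) +
          Sq q m))
      = (-1 : ℂ) ^ (m + 1) *
          (q ^ Tn (2 * m + 3) * q ^ (-((-(m : ℤ) - 2) * (3 * (-(m : ℤ) - 2) + 1) / 2))) +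
        ((-1 : ℂ) ^ m *
          (q ^ Tn (2 * m + 3) * q ^ (-(((m : ℤ) + 1) * (3 * ((m : ℤ) + 1) + 1) / 2))) +
          q ^ Tn (2 * m + 3) * Sq q m) := by
        rw [hsgnA, hsgnB]; ring
    _ = q ^ Tn (2 * m + 3) * Sq q m +
        (-1) ^ (m + 1) * (q ^ Tn (m + 1) - q ^ (Tn (m + 1) + (2 * m + 3))) := by
        rw [hpowA, hpowB, pow_succ]
        ring


lemma Sq_zero (q : ℂ) (hq0 : q ≠ 0) : q * Sq q 0 = 1 - q := by
  unfold Sq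
  have hIcc : Finset.Icc (-((0 : ℕ) : ℤ) - 1) ((0 : ℕ) : ℤ) = {-1, 0} := by
    ext j
    simp only [Finset.mem_Icc, Finset.mem_insert, Finset.mem_singleton]
    push_cast
    omega
  rw [hIcc, Finset.sum_insert (by decide), Finset.sum_singleton]
  norm_num
  field_simp
  ring

lemma main_ind (q : ℂ) (hq0 : q ≠ 0) (m : ℕ) : WE q m = Ee q m ∧ WO q m = Oo q m := by
  induction m with
  | zero =>
    constructor
    · unfold WE Ee
      rw [Finset.sum_range_one]
      unfold weT
      simp [Tn, qp_zero]
    · unfold WO Oo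
      rw [Finset.sum_range_one, Finset.sum_range_one]
      unfold woT dT
      have hqp : qp (q ^ (0 + 1)) q (2 * (0 - 0) + 1) = 1 - q := by
        have : qp (q ^ (0 + 1)) q (2 * (0 - 0) + 1) = qp (q ^ 1) q 1 := rfl
        rw [this, qp_one, pow_one]
      rw [hqp, show Tn 0 = 0 from rfl, show Tn (2 * 0 + 1) = 1 from rfl,
        show Tn (2 * 0 + 2) = 3 from rfl]
      have hS := Sq_zero q hq0
      simp only [pow_zero, one_mul, pow_one]
      linear_combination -hS
    | succ m ih =>
    have hWE1 : WE q (m + 1) = Ee q (m + 1) := by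
      have hb := strip_b q m
      rw [strip_c q m, ih.1, ih.2] at hb
      rw [hb]
      unfold Ee Oo
      have hsplit : ∑ n ∈ Finset.range (m + 1), dT q n =
          (∑ n ∈ Finset.range m, dT q n) + dT q m := Finset.sum_range_succ _ _
      rw [hsplit]
      unfold dT
      have e1 : Tn (2 * m + 2) = Tn (2 * m + 1) + (2 * m + 2) := Tn_succ (2 * m + 1)
      have e2 : Tn (m + 1) = Tn m + (m + 1) := Tn_succ m
      rw [e1, e2, pow_add, pow_add]
      ring
    refine ⟨hWE1, ?_⟩
    have ha := strip_a q (m + 1)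
    rw [strip_d q m, hWE1, ih.2, show 2 * (m + 1) + 1 = 2 * m + 3 by omega] at ha
    rw [ha]
    unfold Ee Oo
    have hsplit : ∑ n ∈ Finset.range (m + 1 + 1), dT q n =
        (∑ n ∈ Finset.range (m + 1), dT q n) + dT q (m + 1) := Finset.sum_range_succ _ _
    rw [hsplit]
    unfold dT
    rw [show 2 * (m + 1) + 1 = 2 * m + 3 by omega, show 2 * (m + 1) + 2 = 2 * m + 4 by omega]
    have hS := S_step q hq0 m
    have e3 : Tn (2 * m + 4) = Tn (2 * m + 3) + (2 * m + 4) := Tn_succ (2 * m + 3)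
    have e4 : Tn (2 * m + 3) = Tn (2 * m + 2) + (2 * m + 3) := Tn_succ (2 * m + 2)
    rw [e3, pow_add q (Tn (2 * m + 3)) (2 * m + 4)]
    rw [e4] at hS ⊢
    rw [pow_add q (Tn (2 * m + 2)) (2 * m + 3)] at hS ⊢
    rw [pow_add q (Tn (m + 1)) (2 * m + 3)] at hS
    linear_combination -hS

lemma negm_qp (q : ℂ) (hq0 : q ≠ 0) (m : ℕ) : ∀ n, n ≤ m →
    (-1 : ℂ) ^ m * q ^ (Tn m) * qp (q ^ (-(m : ℤ))) q n =
      (-1 : ℂ) ^ (m - n) * q ^ (Tn (m - n)) * qp (q ^ ((m - n) + 1)) q n := by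
  intro n
  induction n with
  | zero => intro _; simp only [Nat.sub_zero, qp_zero]
  | succ n ih =>
    intro hn
    have hn' : n ≤ m := by omega
    rw [qp_succ, ← mul_assoc, mul_assoc ((-1 : ℂ) ^ m) _ _]
    rw [show (-1 : ℂ) ^ m * (q ^ Tn m * qp (q ^ (-(m : ℤ))) q n) =
      (-1 : ℂ) ^ m * q ^ Tn m * qp (q ^ (-(m : ℤ))) q n by ring, ih hn']
    obtain ⟨j, hj⟩ : ∃ j, m - n = j + 1 := ⟨m - (n + 1), by omega⟩
    have hm1 : m - (n + 1) = j := by omega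
    rw [hj, hm1, qp_succ', show q ^ (j + 1) * q = q ^ (j + 1 + 1) from (pow_succ q (j + 1)).symm]
    have hz : q ^ (-(m : ℤ)) * q ^ (n : ℕ) = q ^ (-((j : ℤ) + 1)) := by
      rw [← zpow_natCast q n, ← zpow_add₀ hq0]
      congr 1
      omega
    rw [hz]
    have hq2 : q ^ (Tn (j + 1)) = q ^ (Tn j) * q ^ (j + 1) := by rw [Tn_succ, pow_add]
    rw [hq2]
    have hz1 : q ^ (j + 1) * q ^ (-((j : ℤ) + 1)) = 1 := by
      rw [← zpow_natCast q (j + 1), ← zpow_add₀ hq0]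
      rw [show ((j + 1 : ℕ) : ℤ) + (-((j : ℤ) + 1)) = 0 by push_cast; ring, zpow_zero]
    linear_combination ((-1 : ℂ) ^ j * q ^ (Tn j) * qp (q ^ (j + 1 + 1)) q n) * hz1

lemma summand_eq (q : ℂ) (hq0 : q ≠ 0) (m n : ℕ) (hn : n ≤ m) :
    (-1 : ℂ) ^ m * q ^ (Tn m) * (qp (q ^ (-(m : ℤ))) q n * qp (q ^ (m + 1)) q (n + 2)) =
      (-1 : ℂ) ^ (m - n) * q ^ (Tn (m - n)) * qp (q ^ ((m - n) + 1)) q (2 * n + 2) := by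
  have h1 := negm_qp q hq0 m n hn
  have hbase : q ^ ((m - n) + 1) * q ^ n = q ^ (m + 1) := by
    rw [← pow_add]; congr 1; omega
  calc (-1 : ℂ) ^ m * q ^ (Tn m) * (qp (q ^ (-(m : ℤ))) q n * qp (q ^ (m + 1)) q (n + 2))
      = ((-1 : ℂ) ^ m * q ^ (Tn m) * qp (q ^ (-(m : ℤ))) q n) * qp (q ^ (m + 1)) q (n + 2) := by
        ring
    _ = ((-1 : ℂ) ^ (m - n) * q ^ (Tn (m - n)) * qp (q ^ ((m - n) + 1)) q n) *
          qp (q ^ (m + 1)) q (n + 2) := by rw [h1]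
    _ = (-1 : ℂ) ^ (m - n) * q ^ (Tn (m - n)) * qp (q ^ ((m - n) + 1)) q (2 * n + 2) := by
        rw [show 2 * n + 2 = n + (n + 2) by omega, qp_concat (q ^ ((m - n) + 1)) q n (n + 2),
          hbase]
        ring

lemma Tn_odd (n : ℕ) : Tn (2 * n + 1) = 2 * n ^ 2 + 3 * n + 1 := by
  have h : (2 * n + 1) * (2 * n + 1 + 1) = 2 * (2 * n ^ 2 + 3 * n + 1) := by ring
  unfold Tn
  generalize 2 * n ^ 2 + 3 * n + 1 = c at h ⊢
  omega

end Stmt4Aux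

open Stmt4Aux in
/-- `(-1)^m q^{m(m+1)/2} Σ_{n=0}^m (q^{-m};q)_n (q^{m+1};q)_{n+2}
      = Σ_{n=0}^m (1-q^{2n+2}) q^{2n²+3n+1} Σ_{j=-n-1}^n (-1)^{j+1} q^{-j(3j+1)/2}`. -/
theorem stmt4 (m : ℕ) (q : ℂ) (hq : ‖q‖ < 1) (hq0 : q ≠ 0) :
    (-1 : ℂ) ^ m * q ^ (m * (m + 1) / 2) *
        ∑ n ∈ Finset.range (m + 1), qp (q ^ (-(m : ℤ))) q n * qp (q ^ (m + 1)) q (n + 2) =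
      ∑ n ∈ Finset.range (m + 1), (1 - q ^ (2 * n + 2)) * q ^ (2 * n ^ 2 + 3 * n + 1) *
        ∑ j ∈ Finset.Icc (-(n : ℤ) - 1) (n : ℤ),
          (-1 : ℂ) ^ (j + 1) * q ^ (-(j * (3 * j + 1) / 2)) := by
  have key := (main_ind q hq0 (m + 1)).1
  have hTm : m * (m + 1) / 2 = Tn m := rfl
  rw [hTm, Finset.mul_sum]
  have step1 : ∑ n ∈ Finset.range (m + 1),
      (-1 : ℂ) ^ m * q ^ (Tn m) * (qp (q ^ (-(m : ℤ))) q n * qp (q ^ (m + 1)) q (n + 2)) =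
      ∑ n ∈ Finset.range (m + 1),
        (fun r => (-1 : ℂ) ^ r * q ^ (Tn r) * qp (q ^ (r + 1)) q (2 * (m - r) + 2)) (m - n) := by
    apply Finset.sum_congr rfl
    intro n hnn
    have hn : n ≤ m := by simpa [Nat.lt_succ_iff] using hnn
    rw [summand_eq q hq0 m n hn]
    simp only []
    rw [show m - (m - n) = n by omega]
  have step2 : ∑ n ∈ Finset.range (m + 1),
      (fun r => (-1 : ℂ) ^ r * q ^ (Tn r) * qp (q ^ (r + 1)) q (2 * (m - r) + 2)) (m - n) =
      ∑ r ∈ Finset.range (m + 1),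
        (-1 : ℂ) ^ r * q ^ (Tn r) * qp (q ^ (r + 1)) q (2 * (m - r) + 2) := by
    have h := Finset.sum_range_reflect
      (fun r => (-1 : ℂ) ^ r * q ^ (Tn r) * qp (q ^ (r + 1)) q (2 * (m - r) + 2)) (m + 1)
    simp only [Nat.add_sub_cancel] at h
    exact h
  have step3 : ∑ r ∈ Finset.range (m + 1),
      (-1 : ℂ) ^ r * q ^ (Tn r) * qp (q ^ (r + 1)) q (2 * (m - r) + 2) =
      WE q (m + 1) - (-1 : ℂ) ^ (m + 1) * q ^ (Tn (m + 1)) := by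
    have hlast : weT q (m + 1) (m + 1) = (-1 : ℂ) ^ (m + 1) * q ^ (Tn (m + 1)) := by
      unfold weT
      rw [Nat.sub_self, Nat.mul_zero, qp_zero, mul_one]
    have hWEexp : WE q (m + 1) =
        (∑ r ∈ Finset.range (m + 1), weT q (m + 1) r) + (-1 : ℂ) ^ (m + 1) * q ^ (Tn (m + 1)) := by
      unfold WE
      rw [Finset.sum_range_succ, hlast]
    rw [hWEexp]
    have hsum : ∑ r ∈ Finset.range (m + 1), weT q (m + 1) r =
        ∑ r ∈ Finset.range (m + 1),
          (-1 : ℂ) ^ r * q ^ (Tn r) * qp (q ^ (r + 1)) q (2 * (m - r) + 2) := by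
      apply Finset.sum_congr rfl
      intro r hr
      have hrm : r ≤ m := by simpa [Nat.lt_succ_iff] using hr
      unfold weT
      rw [show 2 * ((m + 1) - r) = 2 * (m - r) + 2 by omega]
    rw [hsum]
    ring
  rw [step1, step2, step3, key]
  have hEe : Ee q (m + 1) - (-1 : ℂ) ^ (m + 1) * q ^ (Tn (m + 1)) =
      ∑ n ∈ Finset.range (m + 1), dT q n := by
    unfold Ee
    ring
  rw [hEe]
  apply Finset.sum_congr rfl
  intro n hn
  unfold dT Sq
  rw [Tn_odd n, Tn_succ (2 * n + 1), Tn_odd n, pow_add]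
  ring
end

section
/- For every nonnegative integer m and |q|<1, (-1)^m q^{m(m+1)} Σ_{n=0}^{m} (q^{-2m};q²)_n (q^{2m+2};q²)_{n+2} / (q;q²)_{n+1} = Σ_{n=0}^{m} (-1)^n (1 - q^{4n+4}) q^{3n²+4n+1} Σ_{j=-n-1}^{n} q^{-j(2j+1)}. -/
/- ### Basic lemmas about `qp` -/

lemma qp_succ (a q : ℂ) (n : ℕ) : qp a q (n+1) = qp a q n * (1 - a * q^n) :=
  Finset.prod_range_succ _ _

lemma qp_zero (a q : ℂ) : qp a q 0 = 1 := rfl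

lemma qp_one (a q : ℂ) : qp a q 1 = 1 - a := by simp [qp]

lemma qp_succ' (a q : ℂ) (n : ℕ) : qp a q (n+1) = (1 - a) * qp (a*q) q n := by
  rw [qp, Finset.prod_range_succ', pow_zero, mul_one, mul_comm]
  congr 1
  apply Finset.prod_congr rfl
  intro k _
  ring

lemma qp_add (a q : ℂ) (i j : ℕ) : qp a q (i+j) = qp a q i * qp (a*q^i) q j := by
  rw [qp, Finset.prod_range_add]
  congr 1
  apply Finset.prod_congr rfl
  intro k _
  rw [mul_assoc, ← pow_add]

lemma one_sub_pow_ne {q : ℂ} (hq : ‖q‖ < 1) {k : ℕ} (hk : k ≠ 0) : (1:ℂ) - q ^ k ≠ 0 := by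
  intro h
  have h1 : ‖q ^ k‖ < 1 := by rw [norm_pow]; exact pow_lt_one₀ (norm_nonneg q) hq hk
  have : (q:ℂ)^k = 1 := by linear_combination -h
  rw [this] at h1; simp at h1

lemma qpD_ne {q : ℂ} (hq : ‖q‖ < 1) (n : ℕ) : qp q (q^2) n ≠ 0 := by
  rw [qp]
  apply Finset.prod_ne_zero_iff.2
  intro k _
  have : q * (q^2)^k = q^(2*k+1) := by ring
  rw [this]
  exact one_sub_pow_ne hq (by omega)

/- ### The auxiliary sums -/

noncomputable def wC (q : ℂ) (m r : ℕ) : ℂ :=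
  (-1)^r * q^(r*r) * qp (q^(2*r+2)) (q^2) (2*(m-r)+1) / (q^r * qp q (q^2) (m-r+1))

noncomputable def hB (q : ℂ) (m r : ℕ) : ℂ :=
  (-1)^r * q^(r*(r+1)) * qp (q^(2*r+2)) (q^2) (2*(m-r)+2) / qp q (q^2) (m-r+1)

noncomputable def gG (q : ℂ) (m k : ℕ) : ℂ :=
  (-1)^k * q^(k*k) * (1-q^(2*k)) * (1+q^(2*m+1)) * (1-q^(4*(m-k)+2*k+2))
    * qp (q^(2*k+2)) (q^2) (2*(m-k)) / (q^k * qp q (q^2) (m-k+1))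

noncomputable def CC (q : ℂ) (m : ℕ) : ℂ := ∑ r ∈ Finset.range (m+1), wC q m r

noncomputable def BB (q : ℂ) (m : ℕ) : ℂ := ∑ r ∈ Finset.range (m+1), hB q m r

noncomputable def THs (q : ℂ) (m : ℕ) : ℂ :=
  ∑ j ∈ Finset.Icc (-(m:ℤ)-1) (m:ℤ), q ^ (-(j*(2*j+1)))

noncomputable def TH (q : ℂ) (m : ℕ) : ℂ := q^(3*m*m+4*m+1) * THs q m

/- ### Local (certificate) identities -/

lemma key2a {q : ℂ} (hq : ‖q‖ < 1) (hq0 : q ≠ 0) (m : ℕ) :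
    wC q (m+1) 0 = - gG q (m+1) 1 := by
  rw [wC, gG]
  simp only [Nat.sub_zero, Nat.add_sub_cancel]
  rw [show 2*(m+1)+1 = (2*m+2)+1 from by omega]
  rw [show qp (q^(2*0+2)) (q^2) ((2*m+2)+1)
      = (1 - q^(2*0+2)) * qp (q^(2*0+2)*q^2) (q^2) (2*m+2) from qp_succ' _ _ _]
  rw [show q^(2*0+2)*q^2 = q^(2*1+2) from by ring]
  rw [show 2*m+2 = (2*m+1)+1 from by omega, qp_succ, qp_succ]
  rw [show m+1+1 = (m+1)+1 from rfl, qp_succ]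
  rw [show q*(q^2)^(m+1) = q^(2*m+3) from by ring]
  have hD := qpD_ne hq (m+1)
  have h1 : (1:ℂ) - q^(2*m+3) ≠ 0 := one_sub_pow_ne hq (by omega)
  field_simp
  ring

lemma key2b {q : ℂ} (hq : ‖q‖ < 1) (hq0 : q ≠ 0) (t r : ℕ) :
    wC q (r+t+2) (r+1) + q^(6*(r+t)+13) * wC q (r+t+1) r
      = gG q (r+t+2) (r+1) - gG q (r+t+2) (r+2) := by
  rw [wC, wC, gG, gG]
  simp only [show r+t+2-(r+1) = t+1 from by omega, show r+t+1-r = t+1 from by omega,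
    show r+t+2-(r+2) = t from by omega]
  rw [show 2*(t+1)+1 = (2*t+2)+1 from by omega]
  rw [show qp (q^(2*r+2)) (q^2) ((2*t+2)+1)
      = (1 - q^(2*r+2)) * qp (q^(2*r+2)*q^2) (q^2) (2*t+2) from qp_succ' _ _ _]
  rw [show q^(2*r+2)*q^2 = q^(2*(r+1)+2) from by ring]
  rw [qp_succ]
  rw [show 2*(t+1) = (2*t+1)+1 from by omega]
  rw [show qp (q^(2*(r+1)+2)) (q^2) ((2*t+1)+1)
      = (1 - q^(2*(r+1)+2)) * qp (q^(2*(r+1)+2)*q^2) (q^2) (2*t+1) from qp_succ' _ _ _]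
  rw [show q^(2*(r+1)+2)*q^2 = q^(2*(r+2)+2) from by ring]
  rw [qp_succ]
  rw [show t+1+1 = (t+1)+1 from rfl, qp_succ, show q*(q^2)^(t+1) = q^(2*t+3) from by ring]
  have hD := qpD_ne hq (t+1)
  have h1 : (1:ℂ) - q^(2*t+3) ≠ 0 := one_sub_pow_ne hq (by omega)
  have hP1 := pow_ne_zero (r+1) hq0
  have hP2 := pow_ne_zero (r+2) hq0
  have hPr := pow_ne_zero r hq0
  field_simp
  ring

lemma key2c {q : ℂ} (hq : ‖q‖ < 1) (hq0 : q ≠ 0) (m : ℕ) :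
    wC q (m+1) (m+1) + q^(6*m+7) * wC q m m
      = (-1)^(m+1) * q^(m*m+3*m+2) * (1+q^(2*m+3)) + gG q (m+1) (m+1) := by
  rw [wC, wC, gG]
  simp only [Nat.sub_self, Nat.add_sub_cancel]
  norm_num [qp_one, qp_zero]
  have h1 : (1:ℂ) - q ≠ 0 := by
    have := one_sub_pow_ne hq (k := 1) one_ne_zero
    simpa using this
  have hP := pow_ne_zero (m+1) hq0
  have hPm := pow_ne_zero m hq0
  field_simp
  ring

lemma key3 {q : ℂ} (hq : ‖q‖ < 1) (hq0 : q ≠ 0) (n r : ℕ) :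
    hB q (n+r+1) (r+1) = hB q (n+r) r + (1 - q^(4*(n+r)+8)) * wC q (n+r+1) (r+1) := by
  rw [hB, hB, wC]
  simp only [show n+r+1-(r+1) = n from by omega, show n+r-r = n from by omega]
  rw [show 2*n+2 = (2*n+1)+1 from by omega]
  rw [show qp (q^(2*r+2)) (q^2) ((2*n+1)+1)
      = (1 - q^(2*r+2)) * qp (q^(2*r+2)*q^2) (q^2) (2*n+1) from qp_succ' _ _ _]
  rw [show q^(2*r+2)*q^2 = q^(2*(r+1)+2) from by ring]
  rw [qp_succ]
  have hD := qpD_ne hq (n+1)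
  have hP := pow_ne_zero (r+1) hq0
  field_simp
  ring

lemma key3a {q : ℂ} (hq : ‖q‖ < 1) (hq0 : q ≠ 0) (m : ℕ) :
    hB q (m+1) 0 = (1 - q^(4*m+8)) * wC q (m+1) 0 := by
  rw [hB, wC]
  simp only [Nat.sub_zero]
  rw [show 2*(m+1)+2 = (2*(m+1)+1)+1 from by omega, qp_succ]
  have hD := qpD_ne hq (m+1+1)
  field_simp
  ring

/- ### Recurrences for the sums -/

lemma L2b {q : ℂ} (hq : ‖q‖ < 1) (hq0 : q ≠ 0) (m : ℕ) :
    CC q (m+1) = -(q^(6*m+7)) * CC q m + (-1)^(m+1) * q^(m*m+3*m+2) * (1+q^(2*m+3)) := by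
  have e1 : CC q (m+1) = (∑ r ∈ Finset.range (m+1), wC q (m+1) (r+1)) + wC q (m+1) 0 :=
    Finset.sum_range_succ' _ _
  have e2 : CC q (m+1) + q^(6*m+7) * CC q m
      = (∑ r ∈ Finset.range (m+1), (wC q (m+1) (r+1) + q^(6*m+7) * wC q m r)) + wC q (m+1) 0 := by
    rw [e1, CC, Finset.mul_sum, Finset.sum_add_distrib]
    ring
  have e3 : ∑ r ∈ Finset.range (m+1), (wC q (m+1) (r+1) + q^(6*m+7) * wC q m r)
      = (∑ r ∈ Finset.range m, (gG q (m+1) (r+1) - gG q (m+1) (r+2)))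
        + ((-1)^(m+1) * q^(m*m+3*m+2) * (1+q^(2*m+3)) + gG q (m+1) (m+1)) := by
    rw [Finset.sum_range_succ, key2c hq hq0 m]
    congr 1
    apply Finset.sum_congr rfl
    intro r hr
    rw [Finset.mem_range] at hr
    obtain ⟨t, ht⟩ : ∃ t, m = r + t + 1 := ⟨m - r - 1, by omega⟩
    subst ht
    have := key2b hq hq0 t r
    rw [show r+t+1+1 = r+t+2 from by omega, show 6*(r+t+1)+7 = 6*(r+t)+13 from by omega]
    exact this
  have e4 : ∑ r ∈ Finset.range m, (gG q (m+1) (r+1) - gG q (m+1) (r+2))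
      = gG q (m+1) 1 - gG q (m+1) (m+1) :=
    Finset.sum_range_sub' (fun i => gG q (m+1) (i+1)) m
  have e5 := key2a hq hq0 m
  have h : CC q (m+1) + q^(6*m+7) * CC q m = (-1)^(m+1) * q^(m*m+3*m+2) * (1+q^(2*m+3)) := by
    rw [e2, e3, e4, e5]; ring
  linear_combination h

lemma L3 {q : ℂ} (hq : ‖q‖ < 1) (hq0 : q ≠ 0) (m : ℕ) :
    BB q (m+1) = BB q m + (1 - q^(4*m+8)) * CC q (m+1) := by
  have e1 : BB q (m+1) = (∑ r ∈ Finset.range (m+1), hB q (m+1) (r+1)) + hB q (m+1) 0 :=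
    Finset.sum_range_succ' _ _
  have e2 : CC q (m+1) = (∑ r ∈ Finset.range (m+1), wC q (m+1) (r+1)) + wC q (m+1) 0 :=
    Finset.sum_range_succ' _ _
  have e3 : ∑ r ∈ Finset.range (m+1), hB q (m+1) (r+1)
      = ∑ r ∈ Finset.range (m+1), (hB q m r + (1 - q^(4*m+8)) * wC q (m+1) (r+1)) := by
    apply Finset.sum_congr rfl
    intro r hr
    rw [Finset.mem_range] at hr
    obtain ⟨n, hn⟩ : ∃ n, m = n + r := ⟨m - r, by omega⟩
    subst hn
    exact key3 hq hq0 n r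
  rw [e1, e2, e3, Finset.sum_add_distrib, BB, mul_add, Finset.mul_sum, key3a hq hq0 m]
  ring

lemma zpc {q : ℂ} (hq0 : q ≠ 0) (a : ℕ) (b : ℤ) : q^a * q^b = q^((a:ℤ)+b) := by
  rw [← zpow_natCast q a, ← zpow_add₀ hq0]

lemma L2c {q : ℂ} (hq0 : q ≠ 0) (m : ℕ) :
    TH q (m+1) = q^(6*m+7) * TH q m + q^(m*m+5*m+5) + q^(m*m+3*m+2) := by
  rw [TH, TH, THs, THs]
  have hIcc : Finset.Icc (-((m+1:ℕ):ℤ)-1) ((m+1:ℕ):ℤ)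
      = insert (-(m:ℤ)-2) (insert ((m:ℤ)+1) (Finset.Icc (-(m:ℤ)-1) (m:ℤ))) := by
    ext x
    simp only [Finset.mem_Icc, Finset.mem_insert]
    push_cast
    omega
  rw [hIcc, Finset.sum_insert (by simp only [Finset.mem_insert, Finset.mem_Icc]; omega),
    Finset.sum_insert (by simp only [Finset.mem_Icc]; omega)]
  have e1 : q^(3*(m+1)*(m+1)+4*(m+1)+1) * q^(-((-(m:ℤ)-2)*(2*(-(m:ℤ)-2)+1)))
      = q^(m*m+3*m+2) := by
    rw [zpc hq0, ← zpow_natCast q (m*m+3*m+2)]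
    congr 1
    push_cast
    ring
  have e2 : q^(3*(m+1)*(m+1)+4*(m+1)+1) * q^(-(((m:ℤ)+1)*(2*((m:ℤ)+1)+1)))
      = q^(m*m+5*m+5) := by
    rw [zpc hq0, ← zpow_natCast q (m*m+5*m+5)]
    congr 1
    push_cast
    ring
  have e3 : q^(3*(m+1)*(m+1)+4*(m+1)+1) = q^(6*m+7) * q^(3*m*m+4*m+1) := by ring
  calc q^(3*(m+1)*(m+1)+4*(m+1)+1) * (q^(-((-(m:ℤ)-2)*(2*(-(m:ℤ)-2)+1)))
        + (q^(-(((m:ℤ)+1)*(2*((m:ℤ)+1)+1)))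
          + ∑ j ∈ Finset.Icc (-(m:ℤ)-1) (m:ℤ), q ^ (-(j*(2*j+1)))))
      = q^(3*(m+1)*(m+1)+4*(m+1)+1) * q^(-((-(m:ℤ)-2)*(2*(-(m:ℤ)-2)+1)))
        + q^(3*(m+1)*(m+1)+4*(m+1)+1) * q^(-(((m:ℤ)+1)*(2*((m:ℤ)+1)+1)))
        + q^(3*(m+1)*(m+1)+4*(m+1)+1)
          * ∑ j ∈ Finset.Icc (-(m:ℤ)-1) (m:ℤ), q ^ (-(j*(2*j+1))) := by ring
    _ = q^(6*m+7) * (q^(3*m*m+4*m+1) * ∑ j ∈ Finset.Icc (-(m:ℤ)-1) (m:ℤ), q ^ (-(j*(2*j+1))))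
        + q^(m*m+5*m+5) + q^(m*m+3*m+2) := by rw [e1, e2, e3]; ring

lemma baseC {q : ℂ} (hq : ‖q‖ < 1) (hq0 : q ≠ 0) : CC q 0 = TH q 0 := by
  rw [CC, Finset.sum_range_one, wC, TH, THs]
  simp only [Nat.cast_zero]
  have hIcc : Finset.Icc (-(0:ℤ)-1) (0:ℤ) = insert (-1:ℤ) {0} := by
    ext x
    simp only [Finset.mem_Icc, Finset.mem_insert, Finset.mem_singleton]
    omega
  rw [hIcc, Finset.sum_insert (by simp), Finset.sum_singleton]
  have e1 : ((-1:ℤ)*(2*(-1)+1)) = 1 := by norm_num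
  have e2 : ((0:ℤ)*(2*0+1)) = 0 := by norm_num
  rw [e1, e2]
  have h1 : (1:ℂ) - q ≠ 0 := by
    have := one_sub_pow_ne hq (k := 1) one_ne_zero; simpa using this
  simp only [Nat.sub_zero, pow_zero, one_mul, Nat.mul_zero, Nat.zero_sub, zpow_neg, zpow_one,
    neg_zero, zpow_zero, qp_one]
  norm_num [qp_one]
  field_simp
  ring

lemma L2 {q : ℂ} (hq : ‖q‖ < 1) (hq0 : q ≠ 0) : ∀ m, CC q m = (-1)^m * TH q m := by
  intro m
  induction m with
  | zero => simpa using baseC hq hq0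
  | succ m ih =>
    rw [L2b hq hq0 m, ih, L2c hq0 m]
    ring

/- ### Transforming the left-hand side -/

lemma s1 {q : ℂ} (hq0 : q ≠ 0) (m : ℕ) : ∀ n, n ≤ m →
    qp (q^(-(2*m:ℤ))) (q^2) n * q^(2*m*n+n) = (-1)^n * q^(n*n) * qp (q^(2*(m-n)+2)) (q^2) n := by
  intro n
  induction n with
  | zero => simp [qp_zero]
  | succ n ih =>
    intro hn
    have hnm : n ≤ m := by omega
    rw [qp_succ, show 2*m*(n+1)+(n+1) = (2*m*n+n)+(2*m+1) from by ring, pow_add]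
    have hz : q^(2*m+1) * (q^(-(2*m:ℤ)) * (q^2)^n) = q^(2*n+1) := by
      rw [← zpow_natCast q (2*m+1), ← zpow_natCast (q^2) n, ← zpow_natCast q 2, ← zpow_mul,
        ← zpow_add₀ hq0, ← zpow_add₀ hq0, ← zpow_natCast q (2*n+1)]
      congr 1
      push_cast
      ring
    have lhs_eq : qp (q^(-(2*m:ℤ))) (q^2) n * (1 - q^(-(2*m:ℤ)) * (q^2)^n) * (q^(2*m*n+n) * q^(2*m+1))
        = ((-1)^n * q^(n*n) * qp (q^(2*(m-n)+2)) (q^2) n) * (q^(2*m+1) - q^(2*n+1)) := by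
      rw [← ih hnm]
      rw [show qp (q^(-(2*m:ℤ))) (q^2) n * (1 - q^(-(2*m:ℤ)) * (q^2)^n) * (q^(2*m*n+n) * q^(2*m+1))
          = (qp (q^(-(2*m:ℤ))) (q^2) n * q^(2*m*n+n))
            * (q^(2*m+1) - q^(2*m+1) * (q^(-(2*m:ℤ)) * (q^2)^n)) from by ring, hz]
    rw [lhs_eq]
    rw [qp_succ' (q^(2*(m-(n+1))+2)) (q^2) n]
    rw [show q^(2*(m-(n+1))+2) * q^2 = q^(2*(m-(n+1))+2+2) from by ring,
      show 2*(m-(n+1))+2+2 = 2*(m-n)+2 from by omega,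
      show 2*(m-(n+1))+2 = 2*(m-n) from by omega]
    have hw : q^(2*m+1) = q^(2*n+1) * q^(2*(m-n)) := by
      rw [← pow_add]
      congr 1
      omega
    rw [hw]
    ring

lemma stepA {q : ℂ} (hq : ‖q‖ < 1) (hq0 : q ≠ 0) (n r : ℕ) :
    (-1:ℂ)^(n+r) * q^((n+r)*((n+r)+1)) *
      (qp (q^(-(2*(n+r):ℤ))) (q^2) n * qp (q^(2*(n+r)+2)) (q^2) (n+2) / qp q (q^2) (n+1))
    = hB q (n+r) r := by
  have hs1 := s1 hq0 (n+r) n (by omega)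
  rw [show n+r-n = r from by omega] at hs1
  have hadd := qp_add (q^(2*r+2)) (q^2) n (n+2)
  rw [show q^(2*r+2) * (q^2)^n = q^(2*(n+r)+2) from by rw [← pow_mul, ← pow_add]; congr 1; omega,
    show n+(n+2) = 2*n+2 from by omega] at hadd
  rw [hB, show n+r-r = n from by omega]
  have hD := qpD_ne hq (n+1)
  have hq2 : qp (q^(-(2*(n+r):ℤ))) (q^2) n
      = ((-1)^n * q^(n*n) * qp (q^(2*r+2)) (q^2) n) / q^(2*(n+r)*n+n) := by
    rw [eq_div_iff (pow_ne_zero _ hq0)]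
    exact_mod_cast hs1
  rw [hq2, hadd]
  have hPn := pow_ne_zero (2*(n+r)*n+n) hq0
  rcases Nat.even_or_odd n with he | ho
  · rw [pow_add, he.neg_one_pow]
    field_simp
    ring
  · rw [pow_add, ho.neg_one_pow]
    field_simp
    ring

lemma L1 {q : ℂ} (hq : ‖q‖ < 1) (hq0 : q ≠ 0) (m : ℕ) :
    (-1 : ℂ) ^ m * q ^ (m * (m + 1)) *
        ∑ n ∈ Finset.range (m + 1),
          qp (q ^ (-(2 * m : ℤ))) (q ^ 2) n * qp (q ^ (2 * m + 2)) (q ^ 2) (n + 2) /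
            qp q (q ^ 2) (n + 1) = BB q m := by
  rw [Finset.mul_sum, BB, ← Finset.sum_range_reflect]
  apply Finset.sum_congr rfl
  intro r hr
  rw [Finset.mem_range] at hr
  obtain ⟨n, hn⟩ : ∃ n, m = n + r := ⟨m - r, by omega⟩
  subst hn
  rw [show n+r+1-1-r = n from by omega]
  exact stepA hq hq0 n r

/- ### Base case for `BB` -/

lemma baseB {q : ℂ} (hq : ‖q‖ < 1) (hq0 : q ≠ 0) :
    BB q 0 = (-1 : ℂ) ^ 0 * (1 - q ^ (4 * 0 + 4)) * q ^ (3 * 0 ^ 2 + 4 * 0 + 1) *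
      ∑ j ∈ Finset.Icc (-((0:ℕ) : ℤ) - 1) ((0:ℕ) : ℤ), q ^ (-(j * (2 * j + 1))) := by
  rw [BB, Finset.sum_range_one, hB]
  simp only [Nat.cast_zero]
  have hIcc : Finset.Icc (-(0:ℤ)-1) (0:ℤ) = insert (-1:ℤ) {0} := by
    ext x
    simp only [Finset.mem_Icc, Finset.mem_insert, Finset.mem_singleton]
    omega
  rw [hIcc, Finset.sum_insert (by simp), Finset.sum_singleton]
  have e1 : ((-1:ℤ)*(2*(-1)+1)) = 1 := by norm_num
  have e2 : ((0:ℤ)*(2*0+1)) = 0 := by norm_num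
  rw [e1, e2]
  have h1 : (1:ℂ) - q ≠ 0 := by
    have := one_sub_pow_ne hq (k := 1) one_ne_zero; simpa using this
  rw [show 2*(0-0)+2 = 1+1 from rfl, qp_succ, qp_one]
  simp only [Nat.sub_zero, Nat.zero_sub, pow_zero, one_mul, Nat.mul_zero, zpow_neg, zpow_one,
    neg_zero, zpow_zero, qp_one]
  norm_num
  rw [qp_one]
  field_simp
  ring


/-- `(-1)^m q^{m(m+1)} Σ_{n=0}^m (q^{-2m};q²)_n (q^{2m+2};q²)_{n+2}/(q;q²)_{n+1}
      = Σ_{n=0}^m (-1)^n (1-q^{4n+4}) q^{3n²+4n+1} Σ_{j=-n-1}^n q^{-j(2j+1)}`. -/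
theorem stmt5 (m : ℕ) (q : ℂ) (hq : ‖q‖ < 1) (hq0 : q ≠ 0) :
    (-1 : ℂ) ^ m * q ^ (m * (m + 1)) *
        ∑ n ∈ Finset.range (m + 1),
          qp (q ^ (-(2 * m : ℤ))) (q ^ 2) n * qp (q ^ (2 * m + 2)) (q ^ 2) (n + 2) /
            qp q (q ^ 2) (n + 1) =
      ∑ n ∈ Finset.range (m + 1),
        (-1 : ℂ) ^ n * (1 - q ^ (4 * n + 4)) * q ^ (3 * n ^ 2 + 4 * n + 1) *
          ∑ j ∈ Finset.Icc (-(n : ℤ) - 1) (n : ℤ), q ^ (-(j * (2 * j + 1))) := by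
  rw [L1 hq hq0 m]
  induction m with
  | zero =>
    rw [Finset.sum_range_one]
    exact baseB hq hq0
  | succ m ih =>
    rw [L3 hq hq0 m, ih]
    conv_rhs => rw [Finset.sum_range_succ]
    congr 1
    rw [L2 hq hq0 (m+1), TH, THs]
    push_cast
    ring
end

section
/- For every nonnegative integer m, (-1)^m q^{m(m+1)/2} Σ_{n=0}^{m} (q^{-m};q)_n (q^{m+1};q)_{n+1} / (q;q²)_{n+1} = Σ_{n=0}^{m} (-1)^n q^{n(n+1)} Σ_{j=-n}^{n} q^{-j(j+1)/2}, as an identity of rational functions in q. -/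
namespace StmtAux

lemma qp_succ (a q : ℂ) (n : ℕ) : qp a q (n+1) = qp a q n * (1 - a * q ^ n) :=
  Finset.prod_range_succ _ _

lemma qp_shift (a q : ℂ) (n : ℕ) : qp a q (n+1) = (1 - a) * qp (a*q) q n := by
  unfold qp
  rw [Finset.prod_range_succ', mul_comm]
  congr 1
  · simp
  · exact Finset.prod_congr rfl fun k _ => by ring_nf

variable {q : ℂ}

lemma one_sub_pow_ne (hq : ‖q‖ < 1) {j : ℕ} (hj : 1 ≤ j) : (1:ℂ) - q ^ j ≠ 0 := by
  intro h
  have h1 : q ^ j = 1 := (sub_eq_zero.mp h).symm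
  have h2 : ‖q ^ j‖ < 1 := by
    rw [norm_pow]
    calc ‖q‖ ^ j ≤ ‖q‖ ^ 1 := pow_le_pow_of_le_one (norm_nonneg q) hq.le hj
    _ < 1 := by simpa using hq
  rw [h1] at h2; simp at h2

lemma den_ne (hq : ‖q‖ < 1) (n : ℕ) : qp q (q^2) n ≠ 0 := by
  unfold qp
  rw [Finset.prod_ne_zero_iff]
  intro k _
  have h : q * (q^2)^k = q^(2*k+1) := by ring
  rw [h]
  exact one_sub_pow_ne hq (by omega)

lemma qp_vanish (hq0 : q ≠ 0) (m n : ℕ) (h : m < n) : qp (q ^ (-(m:ℤ))) q n = 0 := by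
  unfold qp
  apply Finset.prod_eq_zero (Finset.mem_range.mpr h)
  have h1 : q ^ (-(m:ℤ)) * q ^ m = 1 := by
    rw [← zpow_natCast q m, ← zpow_add₀ hq0]; simp
  rw [h1, sub_self]

lemma scalar (hq0 : q ≠ 0) (k n : ℕ) :
    (1 - q^(k+2)) * (1 - q^(-((k:ℤ)+1))) * ((1 - q^(2*k+4)) * (1 - q^(2*n+3))) =
      q^(k+3) * ((1 - q^(k+2)) * (1 - q^(k+1))
        * ((1 - q^(-((k:ℤ)+1)) * q^n) * (1 - q^(-((k:ℤ)+1)) * q^(n+1))))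
      - q^(k+2) * ((1 - q^(-((k:ℤ)+1))) * (1 - q^(-((k:ℤ)+2)))
        * ((1 - q^(k+2) * q^(n+1)) * (1 - q^(k+2) * q^(n+2)))) := by
  have h1 : q ^ (-((k:ℤ)+1)) = (q^(k+1))⁻¹ := by
    rw [show -((k:ℤ)+1) = -((k+1:ℕ):ℤ) by push_cast; ring, zpow_neg, zpow_natCast]
  have h2 : q ^ (-((k:ℤ)+2)) = (q^(k+2))⁻¹ := by
    rw [show -((k:ℤ)+2) = -((k+2:ℕ):ℤ) by push_cast; ring, zpow_neg, zpow_natCast]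
  rw [h1, h2]
  have hk1 : (q:ℂ)^(k+1) ≠ 0 := pow_ne_zero _ hq0
  have hk2 : (q:ℂ)^(k+2) ≠ 0 := pow_ne_zero _ hq0
  field_simp
  ring

lemma one_sub_inv_ne (hq : ‖q‖ < 1) (hq0 : q ≠ 0) {j : ℕ} (hj : 1 ≤ j) :
    (1:ℂ) - q ^ (-(j:ℤ)) ≠ 0 := by
  rw [zpow_neg, zpow_natCast]
  intro h
  have h1 : (q^j)⁻¹ = 1 := (sub_eq_zero.mp h).symm
  have h2 : q^j = 1 := by
    have := inv_eq_one.mp h1; exact this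
  exact one_sub_pow_ne hq hj (by rw [h2]; ring)

noncomputable def tt (q : ℂ) (m n : ℕ) : ℂ :=
  qp (q ^ (-(m:ℤ))) q n * qp (q ^ (m+1)) q (n+1) / qp q (q^2) (n+1)

lemma key (hq : ‖q‖ < 1) (hq0 : q ≠ 0) (k n : ℕ) :
    (1 - q^(2*k+4)) * tt q (k+1) n
      = q^(k+3) * tt q k (n+1) - q^(k+2) * tt q (k+2) (n+1) := by
  set x := q ^ (-((k:ℤ)+1)) with hxdef
  set y := q ^ (-((k:ℤ)+2)) with hydef
  set A := qp x q n with hA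
  set B := qp (q^(k+2)) q (n+1) with hB
  set P2 := qp (q ^ (-(k:ℤ))) q (n+1) with hP2
  set P2' := qp (q^(k+1)) q (n+2) with hP2'
  set P3 := qp y q (n+1) with hP3
  set P3' := qp (q^(k+3)) q (n+2) with hP3'
  set C1 := qp q (q^2) (n+1) with hC1
  -- cast normalizations
  have cast1 : (-((k+1:ℕ):ℤ)) = -((k:ℤ)+1) := by push_cast; ring
  have cast2 : (-((k+2:ℕ):ℤ)) = -((k:ℤ)+2) := by push_cast; ring
  have htt1 : tt q (k+1) n = A * B / C1 := by
    rw [tt, cast1, ← hxdef]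
  have htt2 : tt q k (n+1) = P2 * P2' / (C1 * (1 - q^(2*n+3))) := by
    rw [tt, qp_succ q (q^2) (n+1), show q * (q^2)^(n+1) = q^(2*n+3) from by ring]
  have htt3 : tt q (k+2) (n+1) = P3 * P3' / (C1 * (1 - q^(2*n+3))) := by
    rw [tt, cast2, ← hydef, qp_succ q (q^2) (n+1),
      show q * (q^2)^(n+1) = q^(2*n+3) from by ring]
  -- pochhammer relations
  have e1 : x * q = q ^ (-(k:ℤ)) := by
    have h := zpow_add₀ hq0 (-((k:ℤ)+1)) 1
    rw [zpow_one] at h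
    rw [hxdef, ← h]
    exact congrArg (fun t : ℤ => q ^ t) (by ring)
  have e2 : y * q = x := by
    have h := zpow_add₀ hq0 (-((k:ℤ)+2)) 1
    rw [zpow_one] at h
    rw [hxdef, hydef, ← h]
    exact congrArg (fun t : ℤ => q ^ t) (by ring)
  have h2a : (1 - x) * P2 = A * ((1 - x * q^n) * (1 - x * q^(n+1))) := by
    have t1 : qp x q (n+2) = (1 - x) * P2 := by rw [qp_shift, e1]
    have t2 : qp x q (n+2) = A * (1 - x * q^n) * (1 - x * q^(n+1)) := by
      rw [qp_succ, qp_succ]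
    rw [← t1, t2]; ring
  have h2b : P2' = (1 - q^(k+1)) * B := by
    rw [hP2', hB, qp_shift (q^(k+1)) q (n+1), show q^(k+1)*q = q^(k+2) from by ring]
  have h3a : P3 = (1 - y) * A := by
    rw [hP3, hA, qp_shift y q n, e2]
  have h3b : (1 - q^(k+2)) * P3' = B * ((1 - q^(k+2) * q^(n+1)) * (1 - q^(k+2) * q^(n+2))) := by
    have t1 : qp (q^(k+2)) q (n+3) = (1 - q^(k+2)) * P3' := by
      rw [qp_shift (q^(k+2)) q (n+2), show q^(k+2)*q = q^(k+3) from by ring]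
    have t2 : qp (q^(k+2)) q (n+3) = B * (1 - q^(k+2) * q^(n+1)) * (1 - q^(k+2) * q^(n+2)) := by
      rw [show n+3 = (n+1)+1+1 from rfl, qp_succ, qp_succ]
    rw [← t1, t2]; ring
  -- nonvanishing
  have hC1ne : C1 ≠ 0 := den_ne hq (n+1)
  have hdne : (1 : ℂ) - q^(2*n+3) ≠ 0 := one_sub_pow_ne hq (by omega)
  have hc1 : (1:ℂ) - q^(k+2) ≠ 0 := one_sub_pow_ne hq (by omega)
  have hc2 : (1:ℂ) - x ≠ 0 := by
    rw [hxdef, show -((k:ℤ)+1) = -((k+1:ℕ):ℤ) from by push_cast; ring]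
    exact one_sub_inv_ne hq hq0 (by omega)
  -- numerator identity
  have hnum : (1 - q^(2*k+4)) * (A*B) * (1 - q^(2*n+3))
      = q^(k+3) * (P2 * P2') - q^(k+2) * (P3 * P3') := by
    apply mul_left_cancel₀ (mul_ne_zero hc1 hc2)
    have hs := scalar hq0 (q := q) k n
    rw [← hxdef, ← hydef] at hs
    rw [h2b, h3a]
    linear_combination (A*B) * hs - (q^(k+3)*(1-q^(k+2))*(1-q^(k+1))*B) * h2a
      + (q^(k+2)*(1-x)*(1-y)*A) * h3b
  have expand : ∀ u v w : ℂ, u * (v / w) = u * v / w := fun u v w => (mul_div_assoc u v w).symm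
  rw [htt1, htt2, htt3]
  simp only [expand]
  rw [div_sub_div_same, ← hnum, div_eq_div_iff hC1ne (mul_ne_zero hC1ne hdne)]
  ring


lemma tt_vanish (hq0 : q ≠ 0) (m n : ℕ) (h : m < n) : tt q m n = 0 := by
  rw [tt, qp_vanish hq0 m n h]; simp

lemma tt_zero (m : ℕ) : tt q m 0 = (1 - q^(m+1)) / (1 - q) := by
  rw [tt]
  simp [qp]

noncomputable def S (q : ℂ) (m : ℕ) : ℂ := ∑ n ∈ Finset.range (m+1), tt q m n

lemma rec_S (hq : ‖q‖ < 1) (hq0 : q ≠ 0) (k : ℕ) :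
    q^(k+2) * S q (k+2) + (1 - q^(2*k+4)) * S q (k+1) - q^(k+3) * S q k
      = q^(k+2) * (1 + q^(k+2)) := by
  have hS1 : S q (k+1) = ∑ n ∈ Finset.range (k+3), tt q (k+1) n := by
    rw [show k+3 = (k+2)+1 from rfl, Finset.sum_range_succ,
      tt_vanish hq0 (k+1) (k+2) (by omega), add_zero, S]
  have hS0 : S q k = ∑ n ∈ Finset.range (k+3), tt q k n := by
    rw [show k+3 = (k+2)+1 from rfl, Finset.sum_range_succ, Finset.sum_range_succ,
      tt_vanish hq0 k (k+2) (by omega), tt_vanish hq0 k (k+1) (by omega),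
      add_zero, add_zero, S]
  have h1q : (1:ℂ) - q ≠ 0 := by
    have := one_sub_pow_ne hq (j := 1) le_rfl
    rwa [pow_one] at this
  calc q^(k+2) * S q (k+2) + (1 - q^(2*k+4)) * S q (k+1) - q^(k+3) * S q k
      = ∑ n ∈ Finset.range (k+3),
          ((q^(k+2) * tt q (k+2) n - q^(k+3) * tt q k n)
            - (q^(k+2) * tt q (k+2) (n+1) - q^(k+3) * tt q k (n+1))) := by
        rw [hS1, hS0, S, Finset.mul_sum, Finset.mul_sum, Finset.mul_sum,
          ← Finset.sum_add_distrib, ← Finset.sum_sub_distrib]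
        apply Finset.sum_congr rfl
        intro n _
        have hk := key hq hq0 k n
        linear_combination hk
    _ = (q^(k+2) * tt q (k+2) 0 - q^(k+3) * tt q k 0)
          - (q^(k+2) * tt q (k+2) (k+3) - q^(k+3) * tt q k (k+3)) :=
        Finset.sum_range_sub' (fun n => q^(k+2) * tt q (k+2) n - q^(k+3) * tt q k n) (k+3)
    _ = q^(k+2) * (1 + q^(k+2)) := by
        rw [tt_vanish hq0 (k+2) (k+3) (by omega), tt_vanish hq0 k (k+3) (by omega),
          tt_zero, tt_zero]
        field_simp
        ring

noncomputable def W (q : ℂ) (n : ℕ) : ℂ :=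
  ∑ j ∈ Finset.Icc (-(n : ℤ)) (n : ℤ), q ^ (-(j * (j + 1) / 2))

noncomputable def R (q : ℂ) (m : ℕ) : ℂ :=
  ∑ n ∈ Finset.range (m+1), (-1 : ℂ) ^ n * q ^ (n * (n + 1)) * W q n

lemma W_step (hq0 : q ≠ 0) (k : ℕ) :
    q^((k+2)*(k+3)) * W q (k+2)
      = q^((k+2)*(k+3)) * W q (k+1) + q^((k+2)*(k+3)/2) * (1 + q^(k+2)) := by
  obtain ⟨c, hc⟩ := Nat.even_mul_succ_self (k+2)
  obtain ⟨d, hd⟩ := Nat.even_mul_succ_self (k+1)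
  have hc2 : (k+2)*(k+3) = 2*c := by rw [show k+3 = k+2+1 from rfl, hc]; omega
  have hd2 : (k+1)*(k+2) = 2*d := by rw [show k+2 = k+1+1 from rfl, hd]; omega
  have hcd : c = d + (k+2) := by
    have h1 : (k+2)*(k+3) = (k+1)*(k+2) + 2*(k+2) := by ring
    omega
  have hW2 : W q (k+2) = q ^ (-(d:ℤ)) + q ^ (-(c:ℤ)) + W q (k+1) := by
    rw [W, W]
    have hcast : ((k+2:ℕ):ℤ) = (k:ℤ)+2 := by push_cast; ring
    have hcast1 : ((k+1:ℕ):ℤ) = (k:ℤ)+1 := by push_cast; ring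
    rw [hcast, hcast1]
    have hset : Finset.Icc (-((k:ℤ)+2)) ((k:ℤ)+2)
        = insert (-((k:ℤ)+2)) (insert ((k:ℤ)+2) (Finset.Icc (-((k:ℤ)+1)) ((k:ℤ)+1))) := by
      ext j
      simp only [Finset.mem_Icc, Finset.mem_insert]
      omega
    rw [hset, Finset.sum_insert (by simp only [Finset.mem_Icc, Finset.mem_insert]; omega),
      Finset.sum_insert (by simp only [Finset.mem_Icc]; omega)]
    have e1 : -((-((k:ℤ)+2)) * ((-((k:ℤ)+2)) + 1) / 2) = -(d:ℤ) := by
      have h1 : (-((k:ℤ)+2)) * ((-((k:ℤ)+2)) + 1) = 2*(d:ℤ) := by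
        have := hd2
        have h2 : ((k:ℤ)+1)*((k:ℤ)+2) = 2*(d:ℤ) := by exact_mod_cast congrArg (Nat.cast : ℕ → ℤ) this
        linarith [h2, (by ring : (-((k:ℤ)+2)) * ((-((k:ℤ)+2)) + 1) = ((k:ℤ)+1)*((k:ℤ)+2))]
      rw [h1]
      omega
    have e2 : -(((k:ℤ)+2) * (((k:ℤ)+2) + 1) / 2) = -(c:ℤ) := by
      have h1 : ((k:ℤ)+2) * (((k:ℤ)+2) + 1) = 2*(c:ℤ) := by exact_mod_cast congrArg (Nat.cast : ℕ → ℤ) hc2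
      rw [h1]
      omega
    rw [e1, e2]
    ring
  have hdivc : (k+2)*(k+3)/2 = c := by rw [hc2]; omega
  have p1 : q^((k+2)*(k+3)) * q ^ (-(c:ℤ)) = q ^ ((k+2)*(k+3)/2) := by
    rw [hdivc, hc2, ← zpow_natCast q (2*c), ← zpow_add₀ hq0,
      show (((2*c : ℕ)) : ℤ) + (-(c:ℤ)) = ((c : ℕ) : ℤ) by push_cast; omega,
      zpow_natCast]
  have p2 : q^((k+2)*(k+3)) * q ^ (-(d:ℤ)) = q ^ ((k+2)*(k+3)/2) * q^(k+2) := by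
    rw [hdivc, hc2, ← zpow_natCast q (2*c), ← zpow_add₀ hq0, ← pow_add,
      show (((2*c : ℕ)) : ℤ) + (-(d:ℤ)) = (((c + (k+2) : ℕ)) : ℤ) by push_cast; omega,
      zpow_natCast]
  rw [hW2]
  rw [mul_add, mul_add, p1, p2]
  ring

lemma rec_R (hq0 : q ≠ 0) (k : ℕ) :
    R q (k+2) = (1 - q^(2*k+4)) * R q (k+1) + q^(2*k+4) * R q k
      + (-1:ℂ)^k * q^((k+2)*(k+3)/2) * (1 + q^(k+2)) := by
  have h1 : R q (k+2) = R q (k+1) + (-1:ℂ)^(k+2) * q^((k+2)*(k+2+1)) * W q (k+2) := by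
    rw [R, Finset.sum_range_succ]; rfl
  have h2 : R q (k+1) = R q k + (-1:ℂ)^(k+1) * q^((k+1)*(k+1+1)) * W q (k+1) := by
    rw [R, Finset.sum_range_succ]; rfl
  have h3 := W_step hq0 (q := q) k
  linear_combination h1 + q^(2*k+4) * h2 + (-1:ℂ)^(k+2) * h3

lemma main_eq (hq : ‖q‖ < 1) (hq0 : q ≠ 0) (m : ℕ) :
    (-1:ℂ)^m * q^(m*(m+1)/2) * S q m = R q m := by
  have h1q : (1:ℂ) - q ≠ 0 := by
    have := one_sub_pow_ne hq (j := 1) le_rfl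
    rwa [pow_one] at this
  suffices h : ∀ M : ℕ, ((-1:ℂ)^M * q^(M*(M+1)/2) * S q M = R q M) ∧
      ((-1:ℂ)^(M+1) * q^((M+1)*(M+2)/2) * S q (M+1) = R q (M+1)) from (h m).1
  intro M
  induction M with
  | zero =>
    constructor
    · show (-1:ℂ)^0 * q^(0*(0+1)/2) * S q 0 = R q 0
      rw [S, Finset.sum_range_one, tt_zero, R, Finset.sum_range_one, W]
      norm_num
      exact h1q
    · show (-1:ℂ)^1 * q^(1*2/2) * S q 1 = R q 1
      have h3q : (1:ℂ) - q*q^2 ≠ 0 := by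
        rw [show q*q^2 = q^3 from by ring]
        exact one_sub_pow_ne hq (by omega)
      have hI1 : Finset.Icc (-1:ℤ) 1 = {-1, 0, 1} := by decide
      have hI0 : Finset.Icc (0:ℤ) 0 = {0} := Finset.Icc_self 0
      simp only [S, R, tt, W, qp, Finset.sum_range_succ, Finset.sum_range_zero,
        Finset.prod_range_succ, Finset.prod_range_zero, Nat.cast_zero, Nat.cast_one,
        neg_zero, hI1, hI0]
      rw [Finset.sum_singleton, Finset.sum_insert (by decide), Finset.sum_insert (by decide),
        Finset.sum_singleton]
      norm_num
      have h3q' : (1:ℂ) - q^3 ≠ 0 := by rw [← show q*q^2 = q^3 from by ring]; exact h3q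
      field_simp
      ring
  | succ k ih =>
    refine ⟨ih.2, ?_⟩
    show (-1:ℂ)^(k+2) * q^((k+2)*(k+3)/2) * S q (k+2) = R q (k+2)
    obtain ⟨e, he⟩ := Nat.even_mul_succ_self k
    have he2 : k*(k+1) = 2*e := by rw [he]; omega
    have E0 : k*(k+1)/2 = e := by rw [he2]; omega
    have E1 : (k+1)*(k+2)/2 = e + (k+1) := by
      rw [show (k+1)*(k+2) = k*(k+1) + 2*(k+1) from by ring, he2]; omega
    have E2 : (k+2)*(k+3)/2 = e + (k+1) + (k+2) := by
      rw [show (k+2)*(k+3) = k*(k+1) + 2*(k+1) + 2*(k+2) from by ring, he2]; omega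
    have hk : (-1:ℂ)^k * q^(k*(k+1)/2) * S q k = R q k := ih.1
    have hk1 : (-1:ℂ)^(k+1) * q^((k+1)*(k+2)/2) * S q (k+1) = R q (k+1) := ih.2
    rw [E0] at hk
    rw [E1] at hk1
    have hrecS := rec_S hq hq0 k
    have hrecR := rec_R hq0 (q := q) k
    rw [E2] at hrecR ⊢
    linear_combination ((-1:ℂ)^k * q^(e+k+1)) * hrecS - hrecR
      + (1 - q^(2*k+4)) * hk1 + q^(2*k+4) * hk

end StmtAux

/-- `(-1)^m q^{m(m+1)/2} Σ_{n=0}^m (q^{-m};q)_n (q^{m+1};q)_{n+1}/(q;q²)_{n+1}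
      = Σ_{n=0}^m (-1)^n q^{n(n+1)} Σ_{j=-n}^n q^{-j(j+1)/2}`,
    as an identity of rational functions (stated for all `q` with `0 < |q| < 1`). -/
theorem stmt8 (m : ℕ) (q : ℂ) (hq : ‖q‖ < 1) (hq0 : q ≠ 0) :
    (-1 : ℂ) ^ m * q ^ (m * (m + 1) / 2) *
        ∑ n ∈ Finset.range (m + 1),
          qp (q ^ (-(m : ℤ))) q n * qp (q ^ (m + 1)) q (n + 1) / qp q (q ^ 2) (n + 1) =
      ∑ n ∈ Finset.range (m + 1), (-1 : ℂ) ^ n * q ^ (n * (n + 1)) *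
        ∑ j ∈ Finset.Icc (-(n : ℤ)) (n : ℤ), q ^ (-(j * (j + 1) / 2)) := by
  exact StmtAux.main_eq hq hq0 m
end
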